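/- Let ℓ be a prime and let r be an integer with 1 ≤ r ≤ ℓ-1 such that p(ℓn+r) ≡ 0 (mod ℓ) for all integers n ≥ 0, where p(m) denotes the number of unrestricted partitions of m. Then for all integers n ≥ 0, d_ℓ(ℓn+r) ≡ 0 (mod ℓ). -/

import Mathlib

/-- `elongatedDiamond k n` (written `d_k(n)` in the paper) is the coefficient of `q^n` in the
formal power series `∏_{i ≥ 1} (1 - q^(2i))^k / ∏_{i ≥ 1} (1 - q^i)^(3k+1)`.
Since every factor with index `i > n` is congruent to `1` modulo `q^(n+1)`, this coefficient
equals the coefficient of `q^n` in the finite product over `1 ≤ i ≤ n`. -/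
noncomputable def elongatedDiamond (k n : ℕ) : ℤ :=
  PowerSeries.coeff (R := ℤ) n
    (∏ i ∈ Finset.Icc 1 n,
      ((1 - (PowerSeries.X : PowerSeries ℤ) ^ (2 * i)) ^ k *
        (PowerSeries.invOfUnit (1 - (PowerSeries.X : PowerSeries ℤ) ^ i) 1) ^ (3 * k + 1)))

namespace DEllAux

noncomputable section

open PowerSeries Finset
open scoped Classical

variable {α : Type*}

/-- A convenience constructor for the power series whose coefficients indicate a subset. -/
def indicatorSeries (α : Type*) [Semiring α] (s : Set ℕ) : PowerSeries α :=
  PowerSeries.mk fun n => if n ∈ s then 1 else 0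

theorem coeff_indicator (s : Set ℕ) [Semiring α] (n : ℕ) :
    coeff (R := α) n (indicatorSeries _ s) = if n ∈ s then 1 else 0 :=
  coeff_mk _ _

theorem coeff_indicator_pos (s : Set ℕ) [Semiring α] (n : ℕ) (h : n ∈ s) :
    coeff (R := α) n (indicatorSeries _ s) = 1 := by rw [coeff_indicator, if_pos h]

theorem coeff_indicator_neg (s : Set ℕ) [Semiring α] (n : ℕ) (h : n ∉ s) :
    coeff (R := α) n (indicatorSeries _ s) = 0 := by rw [coeff_indicator, if_neg h]

theorem constantCoeff_indicator (s : Set ℕ) [Semiring α] :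
    constantCoeff (R := α) (indicatorSeries _ s) = if 0 ∈ s then 1 else 0 :=
  rfl

theorem num_series' [Field α] (i : ℕ) :
    (1 - (X : PowerSeries α) ^ (i + 1))⁻¹ = indicatorSeries α {k | i + 1 ∣ k} := by
  rw [PowerSeries.inv_eq_iff_mul_eq_one]
  · ext n
    cases n with
    | zero => simp [mul_sub, zero_pow, constantCoeff_indicator]
    | succ n =>
      simp only [coeff_one, if_false, mul_sub, mul_one, coeff_indicator,
        LinearMap.map_sub, reduceCtorEq]
      simp_rw [coeff_mul, coeff_X_pow, coeff_indicator, @boole_mul _ _ _ _]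
      simp only [Set.mem_setOf_eq, ← ite_and, sum_boole, sub_eq_zero]
      symm
      split_ifs with h
      · suffices #{a ∈ antidiagonal (n + 1) | i + 1 ∣ a.fst ∧ a.snd = i + 1} = 1 by
          convert congr_arg ((↑) : ℕ → α) this; norm_cast
        rw [card_eq_one]
        cases' h with p hp
        refine ⟨((i + 1) * (p - 1), i + 1), ?_⟩
        ext ⟨a₁, a₂⟩
        simp only [mem_filter, Prod.mk.injEq, Finset.HasAntidiagonal.mem_antidiagonal, mem_singleton]
        constructor
        · rintro ⟨a_left, ⟨a, rfl⟩, rfl⟩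
          refine ⟨?_, rfl⟩
          rw [Nat.mul_sub_left_distrib, ← hp, ← a_left, mul_one, Nat.add_sub_cancel]
        · rintro ⟨rfl, rfl⟩
          match p with
          | 0 => rw [mul_zero] at hp; cases hp
          | p + 1 => rw [hp]; simp [mul_add]
      · suffices #{a ∈ antidiagonal (n + 1) | i + 1 ∣ a.fst ∧ a.snd = i + 1} = 0 by
          convert congr_arg ((↑) : ℕ → α) this; norm_cast
        rw [card_eq_zero]
        apply eq_empty_of_forall_notMem
        simp only [Prod.forall, mem_filter, not_and, Finset.HasAntidiagonal.mem_antidiagonal]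
        rintro _ h₁ h₂ ⟨a, rfl⟩ rfl
        apply h
        simp [← h₂]
  · simp [zero_pow]

-- The main workhorse of the partition theorem proof.
theorem partialGF_prop (α : Type*) [CommSemiring α] (n : ℕ) (s : Finset ℕ) (hs : ∀ i ∈ s, 0 < i)
    (c : ℕ → Set ℕ) (hc : ∀ i, i ∉ s → 0 ∈ c i) :
    #{p : n.Partition | (∀ j, p.parts.count j ∈ c j) ∧ ∀ j ∈ p.parts, j ∈ s} =
      coeff (R := α) n (∏ i ∈ s, indicatorSeries α ((· * i) '' c i)) := by
  simp_rw [coeff_prod, coeff_indicator, prod_boole, sum_boole]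
  apply congr_arg
  simp only [mem_univ, forall_true_left, not_and, not_forall, exists_prop,
    Set.mem_image, not_exists]
  set φ : (a : Nat.Partition n) →
    a ∈ filter (fun p ↦ (∀ (j : ℕ), Multiset.count j p.parts ∈ c j) ∧ ∀ j ∈ p.parts, j ∈ s) univ →
    ℕ →₀ ℕ := fun p _ => {
      toFun := fun i => Multiset.count i p.parts • i
      support := Finset.filter (fun i => i ≠ 0) p.parts.toFinset
      mem_support_toFun := fun a => by
        simp only [smul_eq_mul, ne_eq, mul_eq_zero, Multiset.count_eq_zero]
        rw [not_or, not_not]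
        simp only [Multiset.mem_toFinset, not_not, mem_filter] }
  refine Finset.card_bij φ ?_ ?_ ?_
  · intro a ha
    simp only [φ, not_forall, not_exists, not_and, exists_prop, mem_filter]
    rw [mem_finsuppAntidiag]
    dsimp only [ne_eq, smul_eq_mul, id_eq, eq_mpr_eq_cast, le_eq_subset, Finsupp.coe_mk]
    simp only [mem_univ, forall_true_left, not_and, not_forall, exists_prop,
      mem_filter, true_and] at ha
    refine ⟨⟨?_, fun i ↦ ?_⟩, fun i _ ↦ ⟨a.parts.count i, ha.1 i, rfl⟩⟩
    · conv_rhs => simp [← a.parts_sum]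
      rw [sum_multiset_count_of_subset _ s]
      · simp only [smul_eq_mul]
      · intro i
        simp only [Multiset.mem_toFinset, not_not, mem_filter]
        apply ha.2
    · simp only [ne_eq, Multiset.mem_toFinset, not_not, mem_filter, and_imp]
      exact fun hi _ ↦ ha.2 i hi
  · intro p₁ hp₁ p₂ hp₂ h
    apply Nat.Partition.ext
    simp only [true_and, mem_univ, mem_filter] at hp₁ hp₂
    ext i
    simp only [φ, ne_eq, Multiset.mem_toFinset, not_not, smul_eq_mul, Finsupp.mk.injEq] at h
    by_cases hi : i = 0
    · rw [hi]
      rw [Multiset.count_eq_zero_of_notMem]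
      · rw [Multiset.count_eq_zero_of_notMem]
        intro a; exact Nat.lt_irrefl 0 (hs 0 (hp₂.2 0 a))
      intro a; exact Nat.lt_irrefl 0 (hs 0 (hp₁.2 0 a))
    · rw [← mul_left_inj' hi]
      rw [funext_iff] at h
      exact h.2 i
  · simp only [φ, mem_filter, mem_finsuppAntidiag, mem_univ, exists_prop, true_and, and_assoc]
    rintro f ⟨hf, hf₃, hf₄⟩
    have hf' : f ∈ finsuppAntidiag s n := mem_finsuppAntidiag.mpr ⟨hf, hf₃⟩
    simp only [mem_finsuppAntidiag] at hf'
    refine ⟨⟨∑ i ∈ s, Multiset.replicate (f i / i) i, ?_, ?_⟩, ?_, ?_, ?_⟩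
    · intro i hi
      simp only [exists_prop, Multiset.mem_sum, mem_map, Function.Embedding.coeFn_mk] at hi
      rcases hi with ⟨t, ht, z⟩
      apply hs
      rwa [Multiset.eq_of_mem_replicate z]
    · simp_rw [Multiset.sum_sum, Multiset.sum_replicate, Nat.nsmul_eq_mul]
      rw [← hf'.1]
      refine sum_congr rfl fun i hi => Nat.div_mul_cancel ?_
      rcases hf₄ i hi with ⟨w, _, hw₂⟩
      rw [← hw₂]
      exact dvd_mul_left _ _
    · intro i
      simp_rw [Multiset.count_sum', Multiset.count_replicate, sum_ite_eq']
      split_ifs with h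
      · rcases hf₄ i h with ⟨w, hw₁, hw₂⟩
        rwa [← hw₂, Nat.mul_div_cancel _ (hs i h)]
      · exact hc _ h
    · intro i hi
      rw [Multiset.mem_sum] at hi
      rcases hi with ⟨j, hj₁, hj₂⟩
      rwa [Multiset.eq_of_mem_replicate hj₂]
    · ext i
      simp_rw [Multiset.count_sum', Multiset.count_replicate, sum_ite_eq']
      simp only [ne_eq, Multiset.mem_toFinset, not_not, smul_eq_mul, ite_mul,
        zero_mul, Finsupp.coe_mk]
      split_ifs with h
      · apply Nat.div_mul_cancel
        rcases hf₄ i h with ⟨w, _, hw₂⟩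
        apply Dvd.intro_left _ hw₂
      · apply symm
        rw [← Finsupp.notMem_support_iff]
        exact notMem_mono hf'.2 h

/-! ### New material -/

/-- Uniqueness of (two-sided) inverses in a commutative ring of power series. -/
theorem inv_unique' {R : Type*} [CommRing R] {f g h : PowerSeries R}
    (hg : f * g = 1) (hh : f * h = 1) : g = h := by
  calc g = g * (f * h) := by rw [hh, mul_one]
    _ = (f * g) * h := by ring
    _ = h := by rw [hg, one_mul]

theorem one_sub_X_pow_mul_indicator [Field α] {i : ℕ} (hi : 1 ≤ i) :
    (1 - (X : PowerSeries α) ^ i) * indicatorSeries α {k | i ∣ k} = 1 := by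
  obtain ⟨j, rfl⟩ := Nat.exists_eq_add_of_le hi
  rw [add_comm 1 j, ← num_series']
  exact PowerSeries.mul_inv_cancel _ (by simp [zero_pow])

variable {ℓ : ℕ} [hℓp : Fact (Nat.Prime ℓ)]

instance : CharP (PowerSeries (ZMod ℓ)) ℓ := by
  constructor
  intro x
  rw [← map_natCast (C (R := ZMod ℓ)) x]
  constructor
  · intro h
    have h0 : (x : ZMod ℓ) = 0 := by
      simpa using congrArg (constantCoeff (R := ZMod ℓ)) h
    exact (ZMod.natCast_eq_zero_iff x ℓ).mp h0
  · intro h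
    rw [(ZMod.natCast_eq_zero_iff x ℓ).mpr h, map_zero]

/-- Frobenius for `1 - X^m`. -/
theorem one_sub_X_pow_lpow (m : ℕ) :
    ((1 - (X : PowerSeries (ZMod ℓ)) ^ m) ^ ℓ) = 1 - (X : PowerSeries (ZMod ℓ)) ^ (m * ℓ) := by
  rw [sub_pow_char (1 : PowerSeries (ZMod ℓ)) (X ^ m), one_pow, ← pow_mul]

theorem indicator_pow_l {i : ℕ} (hi : 1 ≤ i) :
    (indicatorSeries (ZMod ℓ) {k | i ∣ k}) ^ ℓ = indicatorSeries (ZMod ℓ) {k | i * ℓ ∣ k} := by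
  have h1 : (1 - (X : PowerSeries (ZMod ℓ)) ^ (i * ℓ)) *
      (indicatorSeries (ZMod ℓ) {k | i ∣ k}) ^ ℓ = 1 := by
    rw [← one_sub_X_pow_lpow, ← mul_pow, one_sub_X_pow_mul_indicator hi, one_pow]
  have h2 := one_sub_X_pow_mul_indicator (α := ZMod ℓ)
      (i := i * ℓ) (Nat.mul_pos hi hℓp.out.pos)
  exact inv_unique' h1 h2

theorem map_invOfUnit_eq_indicator {i : ℕ} (hi : 1 ≤ i) :
    PowerSeries.map (Int.castRingHom (ZMod ℓ))
        (PowerSeries.invOfUnit (1 - (PowerSeries.X : PowerSeries ℤ) ^ i) 1) =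
      indicatorSeries (ZMod ℓ) {k | i ∣ k} := by
  have hconst : constantCoeff (R := ℤ) (1 - (X : PowerSeries ℤ) ^ i) = (1 : ℤˣ) := by
    simp [zero_pow (by omega : i ≠ 0)]
  have h1 := PowerSeries.mul_invOfUnit (1 - (X : PowerSeries ℤ) ^ i) 1 hconst
  have h2 := congrArg (PowerSeries.map (Int.castRingHom (ZMod ℓ))) h1
  rw [map_mul, map_one, map_sub, map_one, map_pow, PowerSeries.map_X] at h2
  exact inv_unique' h2 (one_sub_X_pow_mul_indicator hi)

/-- The "supported on multiples of ℓ" predicate. -/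
def MulSupp (f : PowerSeries (ZMod ℓ)) : Prop :=
  ∀ j : ℕ, ¬ ℓ ∣ j → coeff (R := ZMod ℓ) j f = 0

theorem mulSupp_one : MulSupp (ℓ := ℓ) 1 := by
  intro j hj
  rw [coeff_one, if_neg]
  rintro rfl
  exact hj (dvd_zero ℓ)

theorem mulSupp_mul {f g : PowerSeries (ZMod ℓ)} (hf : MulSupp f) (hg : MulSupp g) :
    MulSupp (f * g) := by
  intro j hj
  rw [coeff_mul]
  apply Finset.sum_eq_zero
  rintro ⟨a, b⟩ hab
  rw [Finset.HasAntidiagonal.mem_antidiagonal] at hab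
  by_cases ha : ℓ ∣ a
  · have hb : ¬ ℓ ∣ b := fun hb => hj (hab ▸ dvd_add ha hb)
    rw [hg b hb, mul_zero]
  · rw [hf a ha, zero_mul]

theorem mulSupp_pow {f : PowerSeries (ZMod ℓ)} (hf : MulSupp f) (k : ℕ) : MulSupp (f ^ k) := by
  induction k with
  | zero => simpa using mulSupp_one
  | succ k ih => rw [pow_succ]; exact mulSupp_mul ih hf

theorem mulSupp_one_sub_X_pow (m : ℕ) :
    MulSupp (1 - (X : PowerSeries (ZMod ℓ)) ^ (m * ℓ)) := by
  intro j hj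
  rw [map_sub, coeff_one, coeff_X_pow, if_neg, if_neg, sub_zero]
  · rintro rfl
    exact hj (dvd_mul_left ℓ m)
  · rintro rfl
    exact hj (dvd_zero ℓ)

theorem mulSupp_indicator (m : ℕ) :
    MulSupp (indicatorSeries (ZMod ℓ) {k | m * ℓ ∣ k}) := by
  intro j hj
  apply coeff_indicator_neg
  intro hmem
  exact hj ((dvd_mul_left ℓ m).trans hmem)

/-- The partition generating function fact we need. -/
theorem coeff_prod_indicator (α : Type*) [CommSemiring α] {k N : ℕ} (hkN : k ≤ N) :
    (Fintype.card (Nat.Partition k) : α) =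
      coeff (R := α) k (∏ i ∈ Finset.Icc 1 N, indicatorSeries α {m | i ∣ m}) := by
  have himg : ∀ i : ℕ, ((· * i) '' (Set.univ : Set ℕ)) = {m | i ∣ m} := by
    intro i
    ext j
    constructor
    · rintro ⟨a, -, rfl⟩
      exact Dvd.intro_left a rfl
    · rintro ⟨c, rfl⟩
      exact ⟨c, trivial, mul_comm c i⟩
  have := partialGF_prop α k (Finset.Icc 1 N) (fun i hi => (Finset.mem_Icc.mp hi).1)
    (fun _ => Set.univ) (fun _ _ => trivial)
  simp_rw [himg] at this
  rw [← this]
  congr 1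
  rw [Finset.filter_true_of_mem, Finset.card_univ]
  intro p _
  refine ⟨fun _ => trivial, fun j hj => ?_⟩
  rw [Finset.mem_Icc]
  refine ⟨p.parts_pos hj, le_trans ?_ hkN⟩
  have := Multiset.single_le_sum (fun a _ => Nat.zero_le a) j hj
  rwa [p.parts_sum] at this

end

end DEllAux

theorem d_ell_from_partition (ℓ : ℕ) (hℓ : Nat.Prime ℓ) (r : ℕ) (hr1 : 1 ≤ r)
    (hr2 : r ≤ ℓ - 1)
    (hp : ∀ n : ℕ, ℓ ∣ Fintype.card (Nat.Partition (ℓ * n + r))) :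
    ∀ n : ℕ, (ℓ : ℤ) ∣ elongatedDiamond ℓ (ℓ * n + r) := by
  intro n
  haveI : Fact (Nat.Prime ℓ) := ⟨hℓ⟩
  have hℓ2 : 2 ≤ ℓ := hℓ.two_le
  have hrℓ : r < ℓ := by omega
  open PowerSeries Finset DEllAux in
  set N := ℓ * n + r with hN
  rw [← ZMod.intCast_zmod_eq_zero_iff_dvd]
  set R := ZMod ℓ
  set φ := Int.castRingHom R
  have hcast : ((elongatedDiamond ℓ N : ℤ) : R) =
      PowerSeries.coeff (R := R) N (PowerSeries.map φ
        (∏ i ∈ Finset.Icc 1 N,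
          ((1 - (PowerSeries.X : PowerSeries ℤ) ^ (2 * i)) ^ ℓ *
            (PowerSeries.invOfUnit (1 - (PowerSeries.X : PowerSeries ℤ) ^ i) 1) ^ (3 * ℓ + 1)))) := by
    rw [PowerSeries.coeff_map]
    rfl
  rw [hcast]
  -- rewrite the mapped product
  have hmap : PowerSeries.map φ
      (∏ i ∈ Finset.Icc 1 N,
        ((1 - (PowerSeries.X : PowerSeries ℤ) ^ (2 * i)) ^ ℓ *
          (PowerSeries.invOfUnit (1 - (PowerSeries.X : PowerSeries ℤ) ^ i) 1) ^ (3 * ℓ + 1))) =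
      (∏ i ∈ Finset.Icc 1 N, ((1 - (PowerSeries.X : PowerSeries R) ^ (2 * i * ℓ)) *
          (DEllAux.indicatorSeries R {k | i * ℓ ∣ k}) ^ 3)) *
      (∏ i ∈ Finset.Icc 1 N, DEllAux.indicatorSeries R {k | i ∣ k}) := by
    rw [← Finset.prod_mul_distrib, map_prod]
    apply Finset.prod_congr rfl
    intro i hi
    have hi1 : 1 ≤ i := (Finset.mem_Icc.mp hi).1
    rw [map_mul, map_pow, map_sub, map_one, map_pow, PowerSeries.map_X, map_pow,
      DEllAux.map_invOfUnit_eq_indicator hi1, DEllAux.one_sub_X_pow_lpow]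
    have hpow : (DEllAux.indicatorSeries R {k | i ∣ k}) ^ (3 * ℓ + 1) =
        (DEllAux.indicatorSeries R {k | i * ℓ ∣ k}) ^ 3 *
          DEllAux.indicatorSeries R {k | i ∣ k} := by
      rw [pow_succ, mul_comm 3 ℓ, pow_mul, DEllAux.indicator_pow_l hi1]
    rw [hpow]
    ring
  rw [hmap, PowerSeries.coeff_mul]
  apply Finset.sum_eq_zero
  rintro ⟨a, b⟩ hab
  rw [Finset.HasAntidiagonal.mem_antidiagonal] at hab
  by_cases ha : ℓ ∣ a
  · -- then b = ℓ * (n - m) + r, and the second factor vanishes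
    obtain ⟨m, rfl⟩ := ha
    have hmn : m ≤ n := by
      by_contra hcon
      push_neg at hcon
      have : ℓ * (n + 1) ≤ ℓ * m := Nat.mul_le_mul_left ℓ hcon
      have : ℓ * n + ℓ ≤ ℓ * m := by rwa [Nat.mul_add, mul_one] at this
      omega
    have hsub : ℓ * (n - m) + ℓ * m = ℓ * n := by
      rw [← Nat.mul_add, Nat.sub_add_cancel hmn]
    have hb : b = ℓ * (n - m) + r := by omega
    have hbN : b ≤ N := by omega
    have hcoeffb : PowerSeries.coeff (R := R) b
        (∏ i ∈ Finset.Icc 1 N, DEllAux.indicatorSeries R {k | i ∣ k}) =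
        (Fintype.card (Nat.Partition b) : R) :=
      (DEllAux.coeff_prod_indicator R hbN).symm
    rw [hcoeffb, hb]
    rw [show ((Fintype.card (Nat.Partition (ℓ * (n - m) + r)) : R) = 0) from
      (ZMod.natCast_eq_zero_iff _ ℓ).mpr (hp (n - m))]
    ring
  · -- first factor vanishes since it is supported on multiples of ℓ
    have hsupp : DEllAux.MulSupp (ℓ := ℓ)
        (∏ i ∈ Finset.Icc 1 N, ((1 - (PowerSeries.X : PowerSeries R) ^ (2 * i * ℓ)) *
          (DEllAux.indicatorSeries R {k | i * ℓ ∣ k}) ^ 3)) := by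
      apply Finset.prod_induction _ _ (fun _ _ => DEllAux.mulSupp_mul) DEllAux.mulSupp_one
      intro i _
      exact DEllAux.mulSupp_mul (DEllAux.mulSupp_one_sub_X_pow (2 * i))
        (DEllAux.mulSupp_pow (DEllAux.mulSupp_indicator i) 3)
    rw [hsupp a ha, zero_mul]
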